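/- arXiv:1602.07268 — 2 statements merged into one kernel-verified Lean document; each statement's English description precedes it below -/
import Mathlib

section
/- Let (X_n) be a sequence of pairwise independent, identically distributed real-valued random variables with E|X_1| < ∞. Then S_n/n → E X_1 almost surely as n → ∞, where S_n = X_1 + ... + X_n. -/
open MeasureTheory ProbabilityTheory Filter
open scoped BigOperators

theorem etemadi_slln {Ω : Type*} [MeasureSpace Ω] [IsProbabilityMeasure (ℙ : Measure Ω)]
    (X : ℕ → Ω → ℝ)
    (hpind : Pairwise fun i j => IndepFun (X i) (X j) ℙ)
    (hid : ∀ n, 1 ≤ n → IdentDistrib (X n) (X 1) ℙ ℙ)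
    (hint : Integrable (X 1) ℙ) :
    ∀ᵐ ω ∂(ℙ : Measure Ω),
      Tendsto (fun n : ℕ => (∑ k ∈ Finset.Icc 1 n, X k ω) / (n : ℝ)) atTop
        (nhds (∫ ω, X 1 ω ∂(ℙ : Measure Ω))) := by
  set Y : ℕ → Ω → ℝ := fun i => X (i + 1) with hY
  have h := strong_law_ae_real Y hint
    (fun i j hij => hpind (by simpa using hij))
    (fun i => hid (i + 1) (by omega))
  have hmap : ∀ n : ℕ, Finset.Icc 1 n =
      (Finset.range n).map ⟨(· + 1), fun a b hab => by simpa using hab⟩ := by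
    intro n
    ext x
    simp only [Finset.mem_Icc, Finset.mem_map, Finset.mem_range,
      Function.Embedding.coeFn_mk]
    constructor
    · rintro ⟨h1, h2⟩; exact ⟨x - 1, by omega, by show x - 1 + 1 = x; omega⟩
    · rintro ⟨a, ha, rfl⟩; show 1 ≤ a + 1 ∧ a + 1 ≤ n; omega
  filter_upwards [h] with ω hω
  have key : ∀ n : ℕ, ∑ k ∈ Finset.Icc 1 n, X k ω = ∑ i ∈ Finset.range n, Y i ω := by
    intro n
    rw [hmap n, Finset.sum_map]
    rfl
  simpa only [key] using hω
end

section
/- Let 1 < p < 2, 1 ≤ r ≤ p, ε > 0, and let (X_n) be identically distributed real random variables with E|X_1|^p < ∞. For t ∈ [-π, π) let S_k''(t) = ∑_{j=1}^k e^{ijt} X_j 1{|X_j| > n^{1/r}}. Then for each fixed t, ∑_{n=1}^∞ n^{p/r−2} P(max_{1≤k≤n} |S_k''(t)| > ε n^{1/r}) ≤ C ε^{-1} E|X_1|^p < ∞. -/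
open MeasureTheory ProbabilityTheory Filter Real
open scoped BigOperators
open scoped ENNReal NNReal


lemma sum_rpow_le (β : ℝ) (hβ1 : -1 < β) (hβ0 : β < 0) (N : ℕ) :
    ∑ i ∈ Finset.range N, ((i : ℝ) + 1) ^ β ≤ (1 + 1 / (β + 1)) * (N : ℝ) ^ (β + 1) := by
  have hs : 0 < β + 1 := by linarith
  rcases Nat.eq_zero_or_pos N with h0 | hN
  · subst h0; simp [Real.zero_rpow hs.ne']
  obtain ⟨M, rfl⟩ : ∃ M, N = M + 1 := ⟨N - 1, (Nat.succ_pred_eq_of_pos hN).symm⟩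
  have hanti : AntitoneOn (fun x : ℝ => x ^ β) (Set.Icc (1 : ℝ) (1 + M)) := by
    intro x hx y hy hxy
    exact rpow_le_rpow_of_nonpos (lt_of_lt_of_le one_pos hx.1) hxy hβ0.le
  have hint := hanti.sum_le_integral
  have hIeq : ∫ x in (1:ℝ)..(1 + M), x ^ β = (((1:ℝ) + M) ^ (β + 1) - 1 ^ (β + 1)) / (β + 1) :=
    integral_rpow (Or.inl hβ1)
  rw [hIeq] at hint
  have hsum : ∑ i ∈ Finset.range (M + 1), ((i : ℝ) + 1) ^ β
      = (∑ i ∈ Finset.range M, ((1:ℝ) + ((i : ℕ) + 1 : ℕ)) ^ β) + 1 := by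
    rw [Finset.sum_range_succ']
    push_cast
    simp [add_comm]
  have hone : (1:ℝ) ≤ ((1:ℝ) + M) ^ (β + 1) :=
    Real.one_le_rpow (by have := Nat.cast_nonneg (α := ℝ) M; linarith) hs.le
  have hNc : ((M + 1 : ℕ) : ℝ) = 1 + M := by push_cast; ring
  rw [hsum, hNc]
  have h1 : ((1:ℝ)) ^ (β + 1) = 1 := Real.one_rpow _
  rw [h1] at hint
  calc (∑ i ∈ Finset.range M, ((1:ℝ) + ((i : ℕ) + 1 : ℕ)) ^ β) + 1
      ≤ (((1:ℝ) + M) ^ (β + 1) - 1) / (β + 1) + 1 := by linarith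
    _ ≤ ((1:ℝ) + M) ^ (β + 1) / (β + 1) + ((1:ℝ) + M) ^ (β + 1) := by
        have : (((1:ℝ) + M) ^ (β + 1) - 1) / (β + 1) ≤ ((1:ℝ) + M) ^ (β + 1) / (β + 1) := by
          gcongr
          linarith
        linarith
    _ = (1 + 1 / (β + 1)) * ((1:ℝ) + M) ^ (β + 1) := by field_simp; ring

lemma key_scalar (p r : ℝ) (hp1 : 1 < p) (hp2 : p < 2) (hr1 : 1 ≤ r) (hrp : r ≤ p) :
    ∀ x : ℝ, 0 ≤ x →
      (∑' n : ℕ, ENNReal.ofReal (((n : ℝ) + 1) ^ (p / r - 2) *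
          (((n : ℝ) + 1) * (((((n : ℝ) + 1)) ^ (1 / r))⁻¹ *
            (if (((n : ℝ) + 1)) ^ (1 / r) < x then x else 0)))) )
        ≤ ENNReal.ofReal ((2 * (1 + 1 / (p / r - 1 - 1 / r + 1))) * x ^ p) := by
  have hr0 : 0 < r := lt_of_lt_of_le one_pos hr1
  set β : ℝ := p / r - 1 - 1 / r with hβ
  have hβadd : β + 1 = (p - 1) / r := by rw [hβ]; field_simp; ring
  have hs : 0 < β + 1 := by rw [hβadd]; exact div_pos (by linarith) hr0
  have hβ1 : -1 < β := by linarith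
  have hβ0 : β < 0 := by
    have h2 : (p - 1) / r < 1 := (div_lt_one hr0).mpr (by linarith)
    have h3 : β + 1 < 1 := hβadd ▸ h2
    linarith
  intro x hx
  set u : ℕ → ℝ := fun n => ((n : ℝ) + 1) ^ (p / r - 2) *
      (((n : ℝ) + 1) * (((((n : ℝ) + 1)) ^ (1 / r))⁻¹ *
        (if (((n : ℝ) + 1)) ^ (1 / r) < x then x else 0))) with hu
  have hub : ∀ n : ℕ, u n ≤ if (((n : ℝ) + 1)) ^ (1 / r) < x then ((n : ℝ) + 1) ^ β * x else 0 := by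
    intro n
    have hb : (0 : ℝ) < (n : ℝ) + 1 := by positivity
    by_cases h : (((n : ℝ) + 1)) ^ (1 / r) < x
    · rw [if_pos h]
      simp only [hu, if_pos h]
      rw [← Real.rpow_neg hb.le]
      rw [show β = (p / r - 2) + 1 + (-(1 / r)) by ring, Real.rpow_add hb, Real.rpow_add hb,
        Real.rpow_one]
      ring_nf
      exact le_refl _
    · rw [if_neg h]
      simp only [hu, if_neg h, mul_zero, le_refl]
  have hunn : ∀ n : ℕ, 0 ≤ u n := by
    intro n
    simp only [hu]
    positivity
  -- case x ≤ 1 : all terms vanish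
  rcases le_or_gt x 1 with hx1 | hx1
  · have hz : ∀ n : ℕ, u n = 0 := by
      intro n
      have h1 : (1 : ℝ) ≤ ((n : ℝ) + 1) ^ (1 / r) :=
        Real.one_le_rpow (by push_cast; linarith [Nat.cast_nonneg (α := ℝ) n]) (by positivity)
      have h : ¬(((n : ℝ) + 1)) ^ (1 / r) < x := not_lt.mpr (le_trans hx1 h1)
      simp only [hu, if_neg h, mul_zero]
    simp only [hu] at hz
    simp only [hz, ENNReal.ofReal_zero, tsum_zero]
    exact zero_le
  · -- x > 1
    set N : ℕ := ⌈x ^ r⌉₊ with hN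
    have hxr1 : (1 : ℝ) ≤ x ^ r := Real.one_le_rpow hx1.le hr0.le
    have hvanish : ∀ n : ℕ, n ∉ Finset.range N → ENNReal.ofReal (u n) = 0 := by
      intro n hn
      rw [Finset.mem_range, not_lt] at hn
      have hxn : x ^ r ≤ (n : ℝ) + 1 := by
        calc x ^ r ≤ (N : ℝ) := Nat.le_ceil _
          _ ≤ (n : ℝ) := by exact_mod_cast hn
          _ ≤ (n : ℝ) + 1 := by linarith
      have hxle : x ≤ (((n : ℝ) + 1)) ^ (1 / r) := by
        have := Real.rpow_le_rpow (by positivity) hxn (by positivity : (0:ℝ) ≤ 1 / r)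
        rwa [← Real.rpow_mul (le_of_lt (lt_trans one_pos hx1)),
          mul_one_div_cancel hr0.ne', Real.rpow_one] at this
      have h : ¬(((n : ℝ) + 1)) ^ (1 / r) < x := not_lt.mpr hxle
      simp only [hu, if_neg h, mul_zero, ENNReal.ofReal_zero]
    calc (∑' n : ℕ, ENNReal.ofReal (u n)) = ∑ n ∈ Finset.range N, ENNReal.ofReal (u n) :=
          tsum_eq_sum hvanish
      _ = ENNReal.ofReal (∑ n ∈ Finset.range N, u n) :=
          (ENNReal.ofReal_sum_of_nonneg (fun n _ => hunn n)).symm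
      _ ≤ ENNReal.ofReal ((2 * (1 + 1 / (β + 1))) * x ^ p) := by
          apply ENNReal.ofReal_le_ofReal
          calc ∑ n ∈ Finset.range N, u n
              ≤ ∑ n ∈ Finset.range N, ((n : ℝ) + 1) ^ β * x := by
                apply Finset.sum_le_sum
                intro n _
                refine le_trans (hub n) ?_
                split_ifs with h
                · exact le_refl _
                · positivity
            _ = (∑ n ∈ Finset.range N, ((n : ℝ) + 1) ^ β) * x := by rw [Finset.sum_mul]
            _ ≤ ((1 + 1 / (β + 1)) * (N : ℝ) ^ (β + 1)) * x := by
                apply mul_le_mul_of_nonneg_right (sum_rpow_le β hβ1 hβ0 N) hx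
            _ ≤ (2 * (1 + 1 / (β + 1))) * x ^ p := by
                have hN2 : (N : ℝ) ≤ 2 * x ^ r := by
                  calc (N : ℝ) ≤ x ^ r + 1 := by
                        have := Nat.ceil_lt_add_one (by positivity : (0:ℝ) ≤ x ^ r)
                        exact le_of_lt this
                    _ ≤ 2 * x ^ r := by linarith
                have hNp : (N : ℝ) ^ (β + 1) ≤ (2 * x ^ r) ^ (β + 1) :=
                  Real.rpow_le_rpow (Nat.cast_nonneg _) hN2 hs.le
                have hsplit : (2 * x ^ r) ^ (β + 1) = 2 ^ (β + 1) * (x ^ r) ^ (β + 1) :=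
                  Real.mul_rpow (by norm_num) (by positivity)
                have h2le : (2 : ℝ) ^ (β + 1) ≤ 2 := by
                  calc (2 : ℝ) ^ (β + 1) ≤ 2 ^ (1 : ℝ) :=
                        Real.rpow_le_rpow_of_exponent_le one_le_two (by linarith)
                    _ = 2 := Real.rpow_one 2
                have hxrp : (x ^ r) ^ (β + 1) = x ^ (p - 1) := by
                  rw [← Real.rpow_mul hx, hβadd, mul_div_cancel₀ _ hr0.ne']
                have hNpow : (N : ℝ) ^ (β + 1) ≤ 2 * x ^ (p - 1) := by
                  calc (N : ℝ) ^ (β + 1) ≤ 2 ^ (β + 1) * (x ^ r) ^ (β + 1) := by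
                        rw [← hsplit]; exact hNp
                    _ ≤ 2 * x ^ (p - 1) := by
                        rw [hxrp]
                        exact mul_le_mul_of_nonneg_right h2le (by positivity)
                have hfin : x ^ (p - 1) * x = x ^ p := by
                  have h := Real.rpow_add (show (0:ℝ) < x by linarith) (p - 1) 1
                  rw [Real.rpow_one, sub_add_cancel] at h
                  exact h.symm
                calc (1 + 1 / (β + 1)) * (N : ℝ) ^ (β + 1) * x
                    ≤ (1 + 1 / (β + 1)) * (2 * x ^ (p - 1)) * x := by
                      have h1 : (0:ℝ) ≤ 1 + 1 / (β + 1) := by positivity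
                      have := mul_le_mul_of_nonneg_left hNpow h1
                      exact mul_le_mul_of_nonneg_right this hx
                  _ = (2 * (1 + 1 / (β + 1))) * (x ^ (p - 1) * x) := by ring
                  _ = (2 * (1 + 1 / (β + 1))) * x ^ p := by rw [hfin]

theorem large_part_series_bound (p r : ℝ) (hp1 : 1 < p) (hp2 : p < 2)
    (hr1 : 1 ≤ r) (hrp : r ≤ p) :
    ∃ C : ℝ, 0 < C ∧
      ∀ (Ω : Type) (_ : MeasureSpace Ω) (_ : IsProbabilityMeasure (ℙ : Measure Ω))
        (X : ℕ → Ω → ℝ) (ε : ℝ), 0 < ε →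
        (∀ n, 1 ≤ n → IdentDistrib (X n) (X 1) ℙ ℙ) →
        Integrable (fun ω => |X 1 ω| ^ p) ℙ →
        ∀ t : ℝ, t ∈ Set.Ico (-π) π →
          (∑' n : ℕ,
              ENNReal.ofReal ((n + 1 : ℝ) ^ (p / r - 2)) *
                (ℙ : Measure Ω)
                  {ω | ∃ k ∈ Finset.Icc 1 (n + 1),
                    ε * (n + 1 : ℝ) ^ (1 / r) <
                      ‖(∑ j ∈ Finset.Icc 1 k,
                          Complex.exp (Complex.I * j * t) *
                            (if (n + 1 : ℝ) ^ (1 / r) < |X j ω| then X j ω else 0) : ℂ)‖})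
            ≤ ENNReal.ofReal (C * ε⁻¹ * ∫ ω, |X 1 ω| ^ p ∂(ℙ : Measure Ω)) := by
  have hr0 : 0 < r := lt_of_lt_of_le one_pos hr1
  set C : ℝ := 2 * (1 + 1 / (p / r - 1 - 1 / r + 1)) with hC
  have hsC : 0 < p / r - 1 - 1 / r + 1 := by
    have : p / r - 1 - 1 / r + 1 = (p - 1) / r := by field_simp; ring
    rw [this]; exact div_pos (by linarith) hr0
  have hC0 : 0 < C := by positivity
  refine ⟨C, hC0, ?_⟩
  intro Ω _ _ X ε hε hid hint t ht
  -- notation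
  set a : ℕ → ℝ := fun n => ((n : ℝ) + 1) ^ (1 / r) with ha
  have hapos : ∀ n, 0 < a n := fun n => Real.rpow_pos_of_pos (by positivity) _
  set T : ℕ → ℝ → ℝ := fun n y => if a n < |y| then |y| else 0 with hT
  have hTmeas : ∀ n, Measurable (T n) := by
    intro n
    exact Measurable.ite (measurableSet_lt measurable_const measurable_abs)
      measurable_abs measurable_const
  have hTnn : ∀ n y, 0 ≤ T n y := by
    intro n y; simp only [hT]; split_ifs
    · exact abs_nonneg _
    · exact le_refl 0
  have hXm : ∀ j : ℕ, 1 ≤ j → AEMeasurable (X j) (ℙ : Measure Ω) :=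
    fun j hj => (hid j hj).aemeasurable_fst
  -- step 1: event inclusion and Markov
  have hstep1 : ∀ n : ℕ,
      (ℙ : Measure Ω) {ω | ∃ k ∈ Finset.Icc 1 (n + 1),
          ε * a n < ‖(∑ j ∈ Finset.Icc 1 k,
            Complex.exp (Complex.I * j * t) * (if a n < |X j ω| then X j ω else 0) : ℂ)‖}
        ≤ (ℙ : Measure Ω) {ω | ENNReal.ofReal (ε * a n)
            ≤ ENNReal.ofReal (∑ j ∈ Finset.Icc 1 (n + 1), T n (X j ω))} := by
    intro n
    apply measure_mono
    intro ω hω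
    obtain ⟨k, hk, hlt⟩ := hω
    simp only [Set.mem_setOf_eq]
    apply ENNReal.ofReal_le_ofReal
    have h1 : ‖(∑ j ∈ Finset.Icc 1 k,
          Complex.exp (Complex.I * j * t) * (if a n < |X j ω| then X j ω else 0) : ℂ)‖
        ≤ ∑ j ∈ Finset.Icc 1 k, T n (X j ω) := by
      refine le_trans (norm_sum_le _ _) (le_of_eq (Finset.sum_congr rfl ?_))
      intro j _
      rw [norm_mul]
      have he : ‖Complex.exp (Complex.I * j * t)‖ = 1 := by
        rw [Complex.norm_exp]
        simp [Complex.mul_re]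
      rw [he, one_mul]
      simp only [hT]
      split_ifs with h
      · simp
      · simp
    have h2 : ∑ j ∈ Finset.Icc 1 k, T n (X j ω)
        ≤ ∑ j ∈ Finset.Icc 1 (n + 1), T n (X j ω) := by
      apply Finset.sum_le_sum_of_subset_of_nonneg
      · apply Finset.Icc_subset_Icc le_rfl
        exact (Finset.mem_Icc.mp hk).2
      · intro j _ _; exact hTnn n _
    linarith
  -- Markov inequality
  have hgmeas : ∀ n : ℕ, AEMeasurable
      (fun ω => ENNReal.ofReal (∑ j ∈ Finset.Icc 1 (n + 1), T n (X j ω))) (ℙ : Measure Ω) := by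
    intro n
    apply ENNReal.measurable_ofReal.comp_aemeasurable
    apply Finset.aemeasurable_fun_sum
    intro j hj
    exact (hTmeas n).comp_aemeasurable (hXm j (Finset.mem_Icc.mp hj).1)
  have hmarkov : ∀ n : ℕ,
      (ℙ : Measure Ω) {ω | ENNReal.ofReal (ε * a n)
          ≤ ENNReal.ofReal (∑ j ∈ Finset.Icc 1 (n + 1), T n (X j ω))}
        ≤ (∫⁻ ω, ENNReal.ofReal (∑ j ∈ Finset.Icc 1 (n + 1), T n (X j ω)) ∂(ℙ : Measure Ω))
            / ENNReal.ofReal (ε * a n) := by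
    intro n
    exact meas_ge_le_lintegral_div (hgmeas n)
      (ENNReal.ofReal_pos.mpr (by positivity)).ne' ENNReal.ofReal_ne_top
  -- compute the lintegral
  have hlint : ∀ n : ℕ,
      (∫⁻ ω, ENNReal.ofReal (∑ j ∈ Finset.Icc 1 (n + 1), T n (X j ω)) ∂(ℙ : Measure Ω))
        = ((n : ℝ≥0∞) + 1) * ∫⁻ ω, ENNReal.ofReal (T n (X 1 ω)) ∂(ℙ : Measure Ω) := by
    intro n
    have heq : ∀ ω : Ω, ENNReal.ofReal (∑ j ∈ Finset.Icc 1 (n + 1), T n (X j ω))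
        = ∑ j ∈ Finset.Icc 1 (n + 1), ENNReal.ofReal (T n (X j ω)) := fun ω =>
      ENNReal.ofReal_sum_of_nonneg (fun j _ => hTnn n _)
    simp_rw [heq]
    rw [lintegral_finset_sum' (f := fun j ω => ENNReal.ofReal (T n (X j ω))) _ (fun j hj =>
      ENNReal.measurable_ofReal.comp_aemeasurable
        ((hTmeas n).comp_aemeasurable (hXm j (Finset.mem_Icc.mp hj).1)))]
    have hsame : ∀ j ∈ Finset.Icc 1 (n + 1),
        (∫⁻ ω, ENNReal.ofReal (T n (X j ω)) ∂(ℙ : Measure Ω))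
          = ∫⁻ ω, ENNReal.ofReal (T n (X 1 ω)) ∂(ℙ : Measure Ω) := by
      intro j hj
      exact ((hid j (Finset.mem_Icc.mp hj).1).comp
        (ENNReal.measurable_ofReal.comp (hTmeas n))).lintegral_eq
    rw [Finset.sum_congr rfl hsame, Finset.sum_const, Nat.card_Icc]
    simp only [Nat.add_sub_cancel, nsmul_eq_mul]
    push_cast
    ring
  -- abbreviations
  set I : ℕ → ℝ≥0∞ := fun n => ∫⁻ ω, ENNReal.ofReal (T n (X 1 ω)) ∂(ℙ : Measure Ω) with hI
  set D : ℕ → ℝ≥0∞ := fun n =>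
    ENNReal.ofReal (ε⁻¹ * (((n : ℝ) + 1) ^ (p / r - 2) * (((n : ℝ) + 1) * (a n)⁻¹))) with hD
  have hcast : ∀ n : ℕ, ((n : ℝ≥0∞) + 1) = ENNReal.ofReal ((n : ℝ) + 1) := by
    intro n
    rw [ENNReal.ofReal_add (Nat.cast_nonneg n) zero_le_one, ENNReal.ofReal_natCast,
      ENNReal.ofReal_one]
  have hterm : ∀ n : ℕ,
      ENNReal.ofReal (((n : ℝ) + 1) ^ (p / r - 2)) *
        (ℙ : Measure Ω) {ω | ∃ k ∈ Finset.Icc 1 (n + 1),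
          ε * ((n : ℝ) + 1) ^ (1 / r) <
            ‖(∑ j ∈ Finset.Icc 1 k,
                Complex.exp (Complex.I * j * t) *
                  (if ((n : ℝ) + 1) ^ (1 / r) < |X j ω| then X j ω else 0) : ℂ)‖}
        ≤ D n * I n := by
    intro n
    have h1 := (hstep1 n).trans ((hmarkov n).trans (le_of_eq (by rw [hlint n])))
    refine le_trans (mul_le_mul_right h1 _) (le_of_eq ?_)
    have hεa : 0 < ε * a n := mul_pos hε (hapos n)
    rw [ENNReal.div_eq_inv_mul, ← ENNReal.ofReal_inv_of_pos hεa, hcast n]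
    have hpownn : (0 : ℝ) ≤ ((n : ℝ) + 1) ^ (p / r - 2) := Real.rpow_nonneg (by positivity) _
    calc ENNReal.ofReal (((n : ℝ) + 1) ^ (p / r - 2)) *
          (ENNReal.ofReal ((ε * a n)⁻¹) * (ENNReal.ofReal ((n : ℝ) + 1) * I n))
        = (ENNReal.ofReal (((n : ℝ) + 1) ^ (p / r - 2)) * ENNReal.ofReal ((ε * a n)⁻¹) *
            ENNReal.ofReal ((n : ℝ) + 1)) * I n := by ring
      _ = D n * I n := by
          congr 1
          rw [← ENNReal.ofReal_mul hpownn,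
            ← ENNReal.ofReal_mul (mul_nonneg hpownn (inv_nonneg.mpr hεa.le))]
          simp only [hD]
          congr 1
          rw [mul_inv]
          ring
  have hmeas2 : ∀ n : ℕ,
      AEMeasurable (fun ω => D n * ENNReal.ofReal (T n (X 1 ω))) (ℙ : Measure Ω) := by
    intro n
    exact (ENNReal.measurable_ofReal.comp_aemeasurable
      ((hTmeas n).comp_aemeasurable (hXm 1 le_rfl))).const_mul _
  have hpoint : ∀ ω : Ω, (∑' n : ℕ, D n * ENNReal.ofReal (T n (X 1 ω)))
      ≤ ENNReal.ofReal (C * ε⁻¹ * |X 1 ω| ^ p) := by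
    intro ω
    have hkey := key_scalar p r hp1 hp2 hr1 hrp |X 1 ω| (abs_nonneg _)
    calc (∑' n : ℕ, D n * ENNReal.ofReal (T n (X 1 ω)))
        = ∑' n : ℕ, ENNReal.ofReal ε⁻¹ *
            ENNReal.ofReal (((n : ℝ) + 1) ^ (p / r - 2) *
              (((n : ℝ) + 1) * ((((n : ℝ) + 1) ^ (1 / r))⁻¹ *
                (if ((n : ℝ) + 1) ^ (1 / r) < |X 1 ω| then |X 1 ω| else 0)))) := by
          apply tsum_congr
          intro n
          simp only [hD]
          rw [ENNReal.ofReal_mul (inv_nonneg.mpr hε.le), mul_assoc,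
            ← ENNReal.ofReal_mul (by positivity)]
          congr 2
          simp only [ha, hT]
          ring
      _ = ENNReal.ofReal ε⁻¹ * ∑' n : ℕ, ENNReal.ofReal (((n : ℝ) + 1) ^ (p / r - 2) *
            (((n : ℝ) + 1) * ((((n : ℝ) + 1) ^ (1 / r))⁻¹ *
              (if ((n : ℝ) + 1) ^ (1 / r) < |X 1 ω| then |X 1 ω| else 0)))) :=
          ENNReal.tsum_mul_left
      _ ≤ ENNReal.ofReal ε⁻¹ *
            ENNReal.ofReal ((2 * (1 + 1 / (p / r - 1 - 1 / r + 1))) * |X 1 ω| ^ p) :=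
          mul_le_mul_right hkey _
      _ = ENNReal.ofReal (C * ε⁻¹ * |X 1 ω| ^ p) := by
          rw [← ENNReal.ofReal_mul (inv_nonneg.mpr hε.le)]
          congr 1
          rw [hC]
          ring
  calc (∑' n : ℕ,
        ENNReal.ofReal (((n : ℝ) + 1) ^ (p / r - 2)) *
          (ℙ : Measure Ω) {ω | ∃ k ∈ Finset.Icc 1 (n + 1),
            ε * ((n : ℝ) + 1) ^ (1 / r) <
              ‖(∑ j ∈ Finset.Icc 1 k,
                Complex.exp (Complex.I * j * t) *
                  (if ((n : ℝ) + 1) ^ (1 / r) < |X j ω| then X j ω else 0) : ℂ)‖})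
      ≤ ∑' n : ℕ, D n * I n := ENNReal.tsum_le_tsum hterm
    _ = ∑' n : ℕ, ∫⁻ ω, D n * ENNReal.ofReal (T n (X 1 ω)) ∂(ℙ : Measure Ω) := by
        apply tsum_congr
        intro n
        rw [lintegral_const_mul' _ _ ENNReal.ofReal_ne_top]
    _ = ∫⁻ ω, ∑' n : ℕ, D n * ENNReal.ofReal (T n (X 1 ω)) ∂(ℙ : Measure Ω) :=
        (lintegral_tsum hmeas2).symm
    _ ≤ ∫⁻ ω, ENNReal.ofReal (C * ε⁻¹ * |X 1 ω| ^ p) ∂(ℙ : Measure Ω) :=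
        lintegral_mono hpoint
    _ = ENNReal.ofReal (∫ ω, C * ε⁻¹ * |X 1 ω| ^ p ∂(ℙ : Measure Ω)) :=
        (MeasureTheory.ofReal_integral_eq_lintegral_ofReal (hint.const_mul _)
          (Filter.Eventually.of_forall fun ω => by positivity)).symm
    _ = ENNReal.ofReal (C * ε⁻¹ * ∫ ω, |X 1 ω| ^ p ∂(ℙ : Measure Ω)) := by
        rw [MeasureTheory.integral_const_mul]
end
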